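/- Let T and A be positive semidefinite 2×2 complex matrices and p₁,…,p_m positive reals with p₁+⋯+p_m = 1. Then Tr[(T^{1/m} A)^m] ≤ Tr[T^{p₁} A T^{p₂} A ⋯ T^{p_m} A] ≤ Tr[T A^m]. -/

import Mathlib

open Matrix ComplexOrder

lemma aux_prod_entry {R : Type*} [CommRing R] {nn : Type*} [Fintype nn] [DecidableEq nn] :
    ∀ (m : ℕ) (M : Fin m → Matrix nn nn R) (a b : nn),
    (List.ofFn M).prod a b =
      ∑ σ : Fin (m + 1) → nn, if σ 0 = a ∧ σ (Fin.last m) = b then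
        ∏ i : Fin m, M i (σ i.castSucc) (σ i.succ) else 0 := by
  intro m
  induction m with
  | zero =>
    intro M a b
    rw [← (Equiv.funUnique (Fin 1) nn).symm.sum_comp]
    simp only [List.ofFn_zero, List.prod_nil, Equiv.funUnique_symm_apply]
    by_cases h : a = b
    · subst h
      rw [Matrix.one_apply_eq]
      simp [Finset.sum_ite_eq']
    · rw [Matrix.one_apply_ne h]
      symm
      refine Finset.sum_eq_zero fun x _ => ?_
      rw [if_neg]
      rintro ⟨rfl, rfl⟩
      exact h rfl
  | succ m ih =>
    intro M a b
    rw [List.ofFn_succ, List.prod_cons, Matrix.mul_apply]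
    calc
      ∑ c, M 0 a c * (List.ofFn fun i => M i.succ).prod c b
        = ∑ c, ∑ σ : Fin (m+1) → nn, M 0 a c * if σ 0 = c ∧ σ (Fin.last m) = b then
            ∏ i : Fin m, M i.succ (σ i.castSucc) (σ i.succ) else 0 := by
          refine Finset.sum_congr rfl fun c _ => ?_
          rw [ih (fun i => M i.succ) c b, Finset.mul_sum]
      _ = ∑ σ : Fin (m+1) → nn, ∑ c, M 0 a c * if σ 0 = c ∧ σ (Fin.last m) = b then
            ∏ i : Fin m, M i.succ (σ i.castSucc) (σ i.succ) else 0 := Finset.sum_comm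
      _ = ∑ σ : Fin (m+1) → nn, if σ (Fin.last m) = b then
            M 0 a (σ 0) * ∏ i : Fin m, M i.succ (σ i.castSucc) (σ i.succ) else 0 := by
          refine Finset.sum_congr rfl fun σ _ => ?_
          rw [Finset.sum_eq_single (σ 0)]
          · by_cases hq : σ (Fin.last m) = b <;> simp [hq]
          · intro c _ hc
            rw [if_neg, mul_zero]
            exact fun h => hc h.1.symm
          · intro h; exact absurd (Finset.mem_univ _) h
      _ = ∑ σp : Fin (m+2) → nn, if σp 0 = a ∧ σp (Fin.last (m+1)) = b then
            ∏ i : Fin (m+1), M i (σp i.castSucc) (σp i.succ) else 0 := by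
          rw [← (Fin.consEquiv (fun _ : Fin (m + 2) => nn)).sum_comp, Fintype.sum_prod_type,
            Finset.sum_comm]
          refine Finset.sum_congr rfl fun σ _ => ?_
          have hlast : ∀ c : nn, Fin.cons (α := fun _ : Fin (m+2) => nn) c σ (Fin.last (m+1))
              = σ (Fin.last m) := fun c => by
            rw [← Fin.succ_last, Fin.cons_succ]
          have hprod : ∀ c : nn, (∏ i : Fin (m+1),
              M i (Fin.cons (α := fun _ : Fin (m+2) => nn) c σ i.castSucc)
                (Fin.cons (α := fun _ : Fin (m+2) => nn) c σ i.succ))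
              = M 0 c (σ 0) * ∏ i : Fin m, M i.succ (σ i.castSucc) (σ i.succ) := by
            intro c
            rw [Fin.prod_univ_succ, Fin.castSucc_zero, Fin.cons_zero, Fin.cons_succ]
            congr 1
          simp only [Fin.consEquiv_apply, Fin.cons_zero, hlast, hprod]
          rw [Finset.sum_eq_single a]
          · by_cases hq : σ (Fin.last m) = b <;> simp [hq]
          · intro c _ hc
            rw [if_neg]
            exact fun h => hc h.1
          · intro h; exact absurd (Finset.mem_univ _) h

lemma aux_trace_cyclic {R : Type*} [CommRing R] {nn : Type*} [Fintype nn] [DecidableEq nn]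
    (m : ℕ) [NeZero m] (M : Fin m → Matrix nn nn R) :
    Matrix.trace (List.ofFn M).prod = ∑ τ : Fin m → nn, ∏ i : Fin m, M i (τ i) (τ (i + 1)) := by
  obtain ⟨k, rfl⟩ := Nat.exists_eq_succ_of_ne_zero (NeZero.ne m)
  have hsucc : ∀ (τ : Fin (k+1) → nn) (i : Fin (k+1)),
      Fin.snoc (α := fun _ : Fin (k+2) => nn) τ (τ 0) i.succ = τ (i + 1) := by
    intro τ i
    by_cases h : (i : ℕ) + 1 < k + 1
    · have hne : i ≠ Fin.last k := by
        intro he; rw [he] at h; simp at h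
      have h1 : i.succ = Fin.castSucc ⟨(i : ℕ) + 1, h⟩ := by ext; simp
      have h2 : (i + 1 : Fin (k+1)) = ⟨(i : ℕ) + 1, h⟩ := by
        ext; rw [Fin.val_add_one, if_neg hne]
      rw [h1, Fin.snoc_castSucc, h2]
    · have hik : (i : ℕ) = k := by have := i.isLt; omega
      have h1 : i.succ = Fin.last (k + 1) := by ext; simp [hik]
      have h2 : (i + 1 : Fin (k+1)) = 0 := by
        ext
        rw [Fin.val_add_one, if_pos (by ext; simp [hik])]
        rfl
      rw [h1, Fin.snoc_last, h2]
  calc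
    Matrix.trace (List.ofFn M).prod = ∑ a, (List.ofFn M).prod a a := by
      simp [Matrix.trace, Matrix.diag]
    _ = ∑ a, ∑ σ : Fin (k+2) → nn, if σ 0 = a ∧ σ (Fin.last (k+1)) = a then
          ∏ i : Fin (k+1), M i (σ i.castSucc) (σ i.succ) else 0 :=
      Finset.sum_congr rfl fun a _ => aux_prod_entry (k+1) M a a
    _ = ∑ σ : Fin (k+2) → nn, ∑ a, (if σ 0 = a ∧ σ (Fin.last (k+1)) = a then
          ∏ i : Fin (k+1), M i (σ i.castSucc) (σ i.succ) else 0) := Finset.sum_comm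
    _ = ∑ σ : Fin (k+2) → nn, if σ (Fin.last (k+1)) = σ 0 then
          ∏ i : Fin (k+1), M i (σ i.castSucc) (σ i.succ) else 0 := by
      refine Finset.sum_congr rfl fun σ _ => ?_
      rw [Finset.sum_eq_single (σ 0)]
      · by_cases hq : σ (Fin.last (k+1)) = σ 0 <;> simp [hq]
      · intro a _ ha
        rw [if_neg]
        exact fun hcon => ha hcon.1.symm
      · intro h; exact absurd (Finset.mem_univ _) h
    _ = ∑ y : nn × (Fin (k+1) → nn), if (Fin.snoc (α := fun _ : Fin (k+2) => nn) y.2 y.1)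
            (Fin.last (k+1)) = (Fin.snoc (α := fun _ : Fin (k+2) => nn) y.2 y.1) 0 then
          ∏ i : Fin (k+1), M i ((Fin.snoc (α := fun _ : Fin (k+2) => nn) y.2 y.1) i.castSucc)
            ((Fin.snoc (α := fun _ : Fin (k+2) => nn) y.2 y.1) i.succ) else 0 := by
      rw [← (Fin.snocEquiv (fun _ : Fin (k+2) => nn)).sum_comp]
      rfl
    _ = ∑ τ : Fin (k+1) → nn, ∑ x : nn, if x = τ 0 then
          ∏ i : Fin (k+1), M i ((Fin.snoc (α := fun _ : Fin (k+2) => nn) τ x) i.castSucc)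
            ((Fin.snoc (α := fun _ : Fin (k+2) => nn) τ x) i.succ) else 0 := by
      rw [Fintype.sum_prod_type, Finset.sum_comm]
      refine Finset.sum_congr rfl fun τ _ => Finset.sum_congr rfl fun x _ => ?_
      congr 2
      · rw [Fin.snoc_last]
    _ = ∑ τ : Fin (k+1) → nn, ∏ i : Fin (k+1), M i (τ i) (τ (i + 1)) := by
      refine Finset.sum_congr rfl fun τ _ => ?_
      rw [Finset.sum_eq_single (τ 0)]
      · rw [if_pos rfl]
        refine Finset.prod_congr rfl fun i _ => ?_
        congr 1
        · rw [Fin.snoc_castSucc]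
        · exact hsucc τ i
      · intro x _ hx; rw [if_neg hx]
      · intro h; exact absurd (Finset.mem_univ _) h

lemma aux_card_shift (m : ℕ) [NeZero m] (τ : Fin m → Fin 2) :
    (Finset.univ.filter fun i => τ (i + 1) = 0).card
      = (Finset.univ.filter fun i => τ i = 0).card := by
  refine Finset.card_bij (fun i _ => i + 1) ?_ ?_ ?_
  · intro i hi
    simp only [Finset.mem_filter, Finset.mem_univ, true_and] at hi ⊢
    exact hi
  · intro i _ j _ h
    exact add_right_cancel h
  · intro j hj
    simp only [Finset.mem_filter, Finset.mem_univ, true_and] at hj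
    exact ⟨j - 1, by simp only [Finset.mem_filter, Finset.mem_univ, true_and,
      sub_add_cancel]; exact hj, sub_add_cancel _ _⟩

lemma aux_cycle_nonneg (m : ℕ) [NeZero m] (B : Matrix (Fin 2) (Fin 2) ℂ) (hB : B.PosSemidef)
    (τ : Fin m → Fin 2) :
    ∃ r : ℝ, 0 ≤ r ∧ ∏ i : Fin m, B (τ i) (τ (i + 1)) = (r : ℂ) := by
  classical
  -- diagonal entries are nonneg reals
  have hdiag : ∀ j, ∃ s : ℝ, 0 ≤ s ∧ B j j = (s : ℂ) := by
    intro j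
    have h := hB.dotProduct_mulVec_nonneg (Pi.single j 1)
    have hjj : dotProduct (star (Pi.single j 1)) (B *ᵥ Pi.single j 1) = B j j := by
      fin_cases j <;>
        simp [dotProduct, Matrix.mulVec, Pi.single_apply, star, Fin.sum_univ_two,
          Complex.ext_iff, Complex.add_re, Complex.add_im, Complex.mul_re, Complex.mul_im]
    rw [hjj] at h
    obtain ⟨hre, him⟩ := Complex.le_def.mp h
    exact ⟨(B j j).re, by simpa using hre, by
      apply Complex.ext <;> simp [← him]⟩
  obtain ⟨s0, hs0, hB00⟩ := hdiag 0
  obtain ⟨s1, hs1, hB11⟩ := hdiag 1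
  have h10 : B 1 0 = starRingEnd ℂ (B 0 1) := by
    rw [← Complex.star_def]; exact (hB.1.apply 1 0).symm
  set g : Fin m → Fin 2 × Fin 2 := fun i => (τ i, τ (i + 1)) with hg
  have hprod : ∏ i : Fin m, B (τ i) (τ (i + 1))
      = ∏ y : Fin 2 × Fin 2, (B y.1 y.2) ^ (Finset.univ.filter fun i => g i = y).card := by
    rw [← Finset.prod_fiberwise_of_maps_to (fun i _ => Finset.mem_univ (g i))
      (fun i => B (τ i) (τ (i + 1)))]
    refine Finset.prod_congr rfl fun y _ => ?_
    calc ∏ i ∈ Finset.univ.filter fun i => g i = y, B (τ i) (τ (i + 1))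
        = ∏ _i ∈ Finset.univ.filter fun i => g i = y, B y.1 y.2 := by
          refine Finset.prod_congr rfl fun i hi => ?_
          obtain ⟨-, he⟩ := Finset.mem_filter.mp hi
          rw [show τ i = y.1 from congrArg Prod.fst he,
            show τ (i + 1) = y.2 from congrArg Prod.snd he]
      _ = (B y.1 y.2) ^ (Finset.univ.filter fun i => g i = y).card := Finset.prod_const _
  -- the two off-diagonal exponents agree
  have fin2 : ∀ x : Fin 2, ¬x = 0 ↔ x = 1 := by decide
  have hsplit1 : (Finset.univ.filter fun i => (τ i = 0 ∧ τ (i+1) = 0)).card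
      + (Finset.univ.filter fun i => (τ i = 0 ∧ τ (i+1) = 1)).card
      = (Finset.univ.filter fun i : Fin m => τ i = 0).card := by
    rw [← Finset.card_filter_add_card_filter_not
      (s := Finset.univ.filter fun i : Fin m => τ i = 0) (p := fun i => τ (i+1) = 0)]
    rw [Finset.filter_filter, Finset.filter_filter]
    congr 2
    refine Finset.filter_congr fun i _ => ?_
    rw [fin2]
  have hsplit2 : (Finset.univ.filter fun i => (τ i = 0 ∧ τ (i+1) = 0)).card
      + (Finset.univ.filter fun i => (τ i = 1 ∧ τ (i+1) = 0)).card
      = (Finset.univ.filter fun i : Fin m => τ (i + 1) = 0).card := by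
    rw [← Finset.card_filter_add_card_filter_not
      (s := Finset.univ.filter fun i : Fin m => τ (i+1) = 0) (p := fun i => τ i = 0)]
    rw [Finset.filter_filter, Finset.filter_filter]
    congr 2
    · refine Finset.filter_congr fun i _ => ?_
      exact and_comm
    · refine Finset.filter_congr fun i _ => ?_
      rw [and_comm, fin2]
  have hcard : (Finset.univ.filter fun i => g i = ((0 : Fin 2), (1 : Fin 2))).card
      = (Finset.univ.filter fun i => g i = ((1 : Fin 2), (0 : Fin 2))).card := by
    have e1 : (Finset.univ.filter fun i => g i = ((0 : Fin 2), (1 : Fin 2)))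
        = Finset.univ.filter fun i => (τ i = 0 ∧ τ (i+1) = 1) :=
      Finset.filter_congr fun i _ => by simp [hg, Prod.ext_iff]
    have e2 : (Finset.univ.filter fun i => g i = ((1 : Fin 2), (0 : Fin 2)))
        = Finset.univ.filter fun i => (τ i = 1 ∧ τ (i+1) = 0) :=
      Finset.filter_congr fun i _ => by simp [hg, Prod.ext_iff]
    rw [e1, e2]
    have := aux_card_shift m τ
    omega
  -- assemble
  have key : ∀ (z : ℂ) (a n d : ℕ), ((s0 : ℂ)) ^ a * z ^ n * ((starRingEnd ℂ z) ^ n * ((s1 : ℂ)) ^ d)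
      = ((s0 ^ a * Complex.normSq z ^ n * s1 ^ d : ℝ) : ℂ) := by
    intro z a n d
    calc (s0 : ℂ) ^ a * z ^ n * ((starRingEnd ℂ z) ^ n * (s1 : ℂ) ^ d)
        = (s0 : ℂ) ^ a * (z * starRingEnd ℂ z) ^ n * (s1 : ℂ) ^ d := by rw [mul_pow]; ring
      _ = (s0 : ℂ) ^ a * ((Complex.normSq z : ℝ) : ℂ) ^ n * (s1 : ℂ) ^ d := by
          rw [Complex.mul_conj]
      _ = _ := by push_cast; ring
  refine ⟨s0 ^ (Finset.univ.filter fun i => g i = ((0 : Fin 2), (0 : Fin 2))).card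
    * Complex.normSq (B 0 1) ^ (Finset.univ.filter fun i => g i = ((0 : Fin 2), (1 : Fin 2))).card
    * s1 ^ (Finset.univ.filter fun i => g i = ((1 : Fin 2), (1 : Fin 2))).card,
    mul_nonneg (mul_nonneg (pow_nonneg hs0 _) (pow_nonneg (Complex.normSq_nonneg _) _))
      (pow_nonneg hs1 _), ?_⟩
  rw [hprod, Fintype.prod_prod_type]
  rw [Fin.prod_univ_two, Fin.prod_univ_two, Fin.prod_univ_two]
  rw [hB00, hB11, h10, ← hcard]
  exact key (B 0 1) _ _ _

lemma aux_map_conj_prod {nn : Type*} [Fintype nn] [DecidableEq nn] (U V : Matrix nn nn ℂ)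
    (hUV : U * V = 1) (hVU : V * U = 1) :
    ∀ L : List (Matrix nn nn ℂ), (L.map fun X => U * X * V).prod = U * L.prod * V
  | [] => by simpa using hUV.symm
  | x :: L => by
    rw [List.map_cons, List.prod_cons, List.prod_cons,
      aux_map_conj_prod U V hUV hVU L]
    simp only [Matrix.mul_assoc]
    rw [← Matrix.mul_assoc V U, hVU, Matrix.one_mul]

lemma aux_rpow_prod (x : ℝ) (hx : 0 ≤ x) {ι : Type*} (s : Finset ι) :
    ∀ a : ι → ℝ, (∀ i ∈ s, 0 < a i) → ∏ i ∈ s, x ^ a i = x ^ (∑ i ∈ s, a i) := by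
  induction s using Finset.cons_induction with
  | empty => simp
  | cons i s his ih =>
    intro a ha
    rw [Finset.prod_cons, Finset.sum_cons, ih a fun j hj => ha j (Finset.mem_cons_of_mem hj),
      Real.rpow_add' hx]
    exact ne_of_gt (add_pos_of_pos_of_nonneg (ha i (Finset.mem_cons_self _ _))
      (Finset.sum_nonneg fun j hj => (ha j (Finset.mem_cons_of_mem hj)).le))

lemma aux_real_core (m : ℕ) [NeZero m] (eig : Fin 2 → ℝ) (heig : ∀ j, 0 ≤ eig j)
    (rc : (Fin m → Fin 2) → ℝ) (hrc : ∀ τ, 0 ≤ rc τ)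
    (hrot : ∀ (k : Fin m) (τ : Fin m → Fin 2), rc (fun i => τ (i + k)) = rc τ)
    (p : Fin m → ℝ) (hp : ∀ i, 0 < p i) (hsum : ∑ i, p i = 1) :
    (∑ τ : Fin m → Fin 2, (∏ i, eig (τ i) ^ ((m : ℝ)⁻¹)) * rc τ
      ≤ ∑ τ : Fin m → Fin 2, (∏ i, eig (τ i) ^ (p i)) * rc τ)
    ∧ (∑ τ : Fin m → Fin 2, (∏ i, eig (τ i) ^ (p i)) * rc τ
      ≤ ∑ τ : Fin m → Fin 2, eig (τ 0) * rc τ) := by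
  have hm0 : (0 : ℝ) < m := Nat.cast_pos.2 (NeZero.pos m)
  -- rotation-averaging identity
  have rot_sum : ∀ w : (Fin m → Fin 2) → ℝ,
      (m : ℝ) * ∑ τ : Fin m → Fin 2, w τ * rc τ
        = ∑ τ : Fin m → Fin 2, (∑ k : Fin m, w (fun i => τ (i + k))) * rc τ := by
    intro w
    have h1 : ∀ k : Fin m, ∑ τ : Fin m → Fin 2, w τ * rc τ
        = ∑ τ : Fin m → Fin 2, w (fun i => τ (i + k)) * rc τ := by
      intro k
      have hbij : Function.Bijective
          (fun (τ : Fin m → Fin 2) => (fun i => τ (i + k) : Fin m → Fin 2)) := by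
        rw [Function.bijective_iff_has_inverse]
        refine ⟨fun τ i => τ (i - k), fun τ => funext fun i => by simp,
          fun τ => funext fun i => by simp⟩
      have := Fintype.sum_bijective _ hbij
        (fun τ : Fin m → Fin 2 => w (fun i => τ (i + k)) * rc (fun i => τ (i + k)))
        (fun τ : Fin m → Fin 2 => w τ * rc τ) (fun τ => rfl)
      rw [← this]
      exact Finset.sum_congr rfl fun τ _ => by rw [hrot k τ]
    calc (m : ℝ) * ∑ τ : Fin m → Fin 2, w τ * rc τ
        = ∑ _k : Fin m, ∑ τ : Fin m → Fin 2, w τ * rc τ := by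
          rw [Finset.sum_const, Finset.card_univ, Fintype.card_fin, nsmul_eq_mul]
      _ = ∑ k : Fin m, ∑ τ : Fin m → Fin 2, w (fun i => τ (i + k)) * rc τ :=
          Finset.sum_congr rfl fun k _ => h1 k
      _ = ∑ τ : Fin m → Fin 2, (∑ k : Fin m, w (fun i => τ (i + k))) * rc τ := by
          rw [Finset.sum_comm]
          exact Finset.sum_congr rfl fun τ _ => (Finset.sum_mul _ _ _).symm
  -- the uniform weight is rotation invariant
  have wu_rot : ∀ (τ : Fin m → Fin 2) (k : Fin m),
      ∏ i : Fin m, eig (τ (i + k)) ^ ((m : ℝ)⁻¹) = ∏ i : Fin m, eig (τ i) ^ ((m : ℝ)⁻¹) :=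
    fun τ k => Fintype.prod_bijective (fun i : Fin m => i + k) (Equiv.addRight k).bijective
      _ _ (fun i => rfl)
  -- geometric-mean identity
  have geo : ∀ τ : Fin m → Fin 2,
      ∏ k : Fin m, (∏ i : Fin m, eig (τ (i + k)) ^ (p i)) ^ ((m : ℝ)⁻¹)
        = ∏ i : Fin m, eig (τ i) ^ ((m : ℝ)⁻¹) := by
    intro τ
    calc ∏ k : Fin m, (∏ i : Fin m, eig (τ (i + k)) ^ (p i)) ^ ((m : ℝ)⁻¹)
        = ∏ k : Fin m, ∏ i : Fin m, (eig (τ (i + k)) ^ (p i)) ^ ((m : ℝ)⁻¹) :=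
          Finset.prod_congr rfl fun k _ =>
            (Real.finset_prod_rpow _ _ (fun i _ => Real.rpow_nonneg (heig _) _) _).symm
      _ = ∏ k : Fin m, ∏ i : Fin m, eig (τ (i + k)) ^ (p i * (m : ℝ)⁻¹) :=
          Finset.prod_congr rfl fun k _ => Finset.prod_congr rfl fun i _ =>
            (Real.rpow_mul (heig _) _ _).symm
      _ = ∏ i : Fin m, ∏ k : Fin m, eig (τ (i + k)) ^ (p i * (m : ℝ)⁻¹) := Finset.prod_comm
      _ = ∏ i : Fin m, ∏ j : Fin m, eig (τ j) ^ (p i * (m : ℝ)⁻¹) :=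
          Finset.prod_congr rfl fun i _ =>
            Fintype.prod_bijective (fun k : Fin m => i + k) (Equiv.addLeft i).bijective
              _ _ (fun k => rfl)
      _ = ∏ j : Fin m, ∏ i : Fin m, eig (τ j) ^ (p i * (m : ℝ)⁻¹) := Finset.prod_comm
      _ = ∏ j : Fin m, eig (τ j) ^ (∑ i : Fin m, p i * (m : ℝ)⁻¹) :=
          Finset.prod_congr rfl fun j _ => aux_rpow_prod (eig (τ j)) (heig _) _ _
            (fun i _ => mul_pos (hp i) (inv_pos.2 hm0))
      _ = ∏ j : Fin m, eig (τ j) ^ ((m : ℝ)⁻¹) := by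
          rw [← Finset.sum_mul, hsum, one_mul]
  constructor
  · rw [← mul_le_mul_iff_right₀ hm0, rot_sum, rot_sum]
    refine Finset.sum_le_sum fun τ _ => mul_le_mul_of_nonneg_right ?_ (hrc τ)
    calc ∑ k : Fin m, ∏ i : Fin m, eig (τ (i + k)) ^ ((m : ℝ)⁻¹)
        = ∑ _k : Fin m, ∏ i : Fin m, eig (τ i) ^ ((m : ℝ)⁻¹) :=
          Finset.sum_congr rfl fun k _ => wu_rot τ k
      _ = (m : ℝ) * ∏ i : Fin m, eig (τ i) ^ ((m : ℝ)⁻¹) := by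
          rw [Finset.sum_const, Finset.card_univ, Fintype.card_fin, nsmul_eq_mul]
      _ = (m : ℝ) * ∏ k : Fin m, (∏ i : Fin m, eig (τ (i + k)) ^ (p i)) ^ ((m : ℝ)⁻¹) := by
          rw [geo τ]
      _ ≤ (m : ℝ) * ∑ k : Fin m, (m : ℝ)⁻¹ * ∏ i : Fin m, eig (τ (i + k)) ^ (p i) := by
          refine mul_le_mul_of_nonneg_left ?_ hm0.le
          refine Real.geom_mean_le_arith_mean_weighted _ _ _
            (fun k _ => (inv_pos.2 hm0).le) ?_
            (fun k _ => Finset.prod_nonneg fun i _ => Real.rpow_nonneg (heig _) _)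
          rw [Finset.sum_const, Finset.card_univ, Fintype.card_fin, nsmul_eq_mul,
            mul_inv_cancel₀ hm0.ne']
      _ = ∑ k : Fin m, ∏ i : Fin m, eig (τ (i + k)) ^ (p i) := by
          rw [Finset.mul_sum]
          exact Finset.sum_congr rfl fun k _ => by
            rw [← mul_assoc, mul_inv_cancel₀ hm0.ne', one_mul]
  · rw [← mul_le_mul_iff_right₀ hm0, rot_sum, rot_sum]
    refine Finset.sum_le_sum fun τ _ => mul_le_mul_of_nonneg_right ?_ (hrc τ)
    calc ∑ k : Fin m, ∏ i : Fin m, eig (τ (i + k)) ^ (p i)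
        ≤ ∑ k : Fin m, ∑ i : Fin m, p i * eig (τ (i + k)) :=
          Finset.sum_le_sum fun k _ =>
            Real.geom_mean_le_arith_mean_weighted _ _ _ (fun i _ => (hp i).le) hsum
              (fun i _ => heig _)
      _ = ∑ i : Fin m, p i * ∑ k : Fin m, eig (τ (i + k)) := by
          rw [Finset.sum_comm]
          exact Finset.sum_congr rfl fun i _ => (Finset.mul_sum _ _ _).symm
      _ = ∑ i : Fin m, p i * ∑ j : Fin m, eig (τ j) := by
          refine Finset.sum_congr rfl fun i _ => ?_
          congr 1
          exact Fintype.sum_bijective (fun k : Fin m => i + k) (Equiv.addLeft i).bijective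
            _ _ (fun k => rfl)
      _ = ∑ j : Fin m, eig (τ j) := by rw [← Finset.sum_mul, hsum, one_mul]
      _ = ∑ k : Fin m, eig (τ (0 + k)) := Finset.sum_congr rfl fun k _ => by rw [zero_add]

open Matrix ComplexOrder in
theorem trace_prod_fracPow_chain {m : ℕ} (hm : 0 < m)
    (T A : Matrix (Fin 2) (Fin 2) ℂ) (hT : T.PosSemidef) (hA : A.PosSemidef)
    (p : Fin m → ℝ) (hp : ∀ i, 0 < p i) (hsum : ∑ i, p i = 1) :
    trace ((hT.1.cfc (fun x : ℝ => x ^ ((m : ℝ)⁻¹)) * A) ^ m) ≤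
        trace (List.ofFn (fun i : Fin m => hT.1.cfc (fun x : ℝ => x ^ p i) * A)).prod ∧
      trace (List.ofFn (fun i : Fin m => hT.1.cfc (fun x : ℝ => x ^ p i) * A)).prod ≤
        trace (T * A ^ m) := by
  haveI : NeZero m := ⟨hm.ne'⟩
  classical
  set hH := hT.1 with hHdef
  set U : Matrix (Fin 2) (Fin 2) ℂ := (Matrix.IsHermitian.eigenvectorUnitary hH : Matrix (Fin 2) (Fin 2) ℂ) with hUdef
  have hUV : U * star U = 1 := Unitary.coe_mul_star_self _
  have hVU : star U * U = 1 := Unitary.coe_star_mul_self _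
  set eig : Fin 2 → ℝ := hH.eigenvalues with heigdef
  have heig : ∀ j, 0 ≤ eig j := fun j => hT.eigenvalues_nonneg j
  set B : Matrix (Fin 2) (Fin 2) ℂ := star U * A * U with hBdef
  have hB : B.PosSemidef := by
    rw [hBdef, Matrix.star_eq_conjTranspose]
    exact hA.conjTranspose_mul_mul_same U
  -- cfc as conjugated diagonal
  have hcfc : ∀ f : ℝ → ℝ, hH.cfc f * A
      = U * ((Matrix.diagonal fun j => ((f (eig j) : ℝ) : ℂ)) * B) * star U := by
    intro f
    rw [Matrix.IsHermitian.cfc]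
    show U * Matrix.diagonal (RCLike.ofReal ∘ f ∘ eig) * star U * A = _
    have hd : Matrix.diagonal (RCLike.ofReal ∘ f ∘ eig)
        = Matrix.diagonal fun j => ((f (eig j) : ℝ) : ℂ) := rfl
    rw [hd, hBdef]
    simp only [Matrix.mul_assoc]
    rw [hUV, Matrix.mul_one]
  -- generic chain expansion
  have hchain : ∀ d : Fin m → Fin 2 → ℝ,
      trace (List.ofFn fun i =>
          U * ((Matrix.diagonal fun j => ((d i j : ℝ) : ℂ)) * B) * star U).prod
        = ∑ τ : Fin m → Fin 2, (∏ i, ((d i (τ i) : ℝ) : ℂ)) * ∏ i, B (τ i) (τ (i + 1)) := by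
    intro d
    have hmap : (List.ofFn fun i =>
        U * ((Matrix.diagonal fun j => ((d i j : ℝ) : ℂ)) * B) * star U)
        = (List.ofFn fun i =>
          (Matrix.diagonal fun j => ((d i j : ℝ) : ℂ)) * B).map fun X => U * X * star U := by
      rw [List.map_ofFn]; rfl
    rw [hmap, aux_map_conj_prod U (star U) hUV hVU, Matrix.trace_mul_cycle,
      hVU, Matrix.one_mul, aux_trace_cyclic m]
    refine Finset.sum_congr rfl fun τ _ => ?_
    rw [← Finset.prod_mul_distrib]
    exact Finset.prod_congr rfl fun i _ => Matrix.diagonal_mul _ _ _ _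
  -- the nonnegative real cycle weights
  choose rc hrc0 hrcEq using aux_cycle_nonneg m B hB
  have hrot : ∀ (k : Fin m) (τ : Fin m → Fin 2), rc (fun i => τ (i + k)) = rc τ := by
    intro k τ
    have h1 : ∏ i : Fin m, B ((fun i => τ (i + k)) i) ((fun i => τ (i + k)) (i + 1))
        = ∏ i : Fin m, B (τ i) (τ (i + 1)) := by
      refine Fintype.prod_bijective (fun i : Fin m => i + k) (Equiv.addRight k).bijective
        _ _ fun i => ?_
      dsimp only
      rw [add_right_comm]
    have h2 := (hrcEq (fun i => τ (i + k))).symm.trans (h1.trans (hrcEq τ))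
    exact_mod_cast h2
  -- trace computation for a general diagonal family
  have key : ∀ d : Fin m → Fin 2 → ℝ,
      trace (List.ofFn fun i =>
          U * ((Matrix.diagonal fun j => ((d i j : ℝ) : ℂ)) * B) * star U).prod
        = ((∑ τ : Fin m → Fin 2, (∏ i, d i (τ i)) * rc τ : ℝ) : ℂ) := by
    intro d
    rw [hchain d]
    rw [show ((∑ τ : Fin m → Fin 2, (∏ i, d i (τ i)) * rc τ : ℝ) : ℂ)
        = ∑ τ : Fin m → Fin 2, (∏ i, ((d i (τ i) : ℝ) : ℂ)) * ((rc τ : ℝ) : ℂ) from by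
      push_cast; rfl]
    exact Finset.sum_congr rfl fun τ _ => by rw [hrcEq τ]
  -- the three traces
  have e2 : trace (List.ofFn (fun i : Fin m => hH.cfc (fun x : ℝ => x ^ p i) * A)).prod
      = ((∑ τ : Fin m → Fin 2, (∏ i, eig (τ i) ^ p i) * rc τ : ℝ) : ℂ) := by
    rw [show (List.ofFn fun i : Fin m => hH.cfc (fun x : ℝ => x ^ p i) * A)
        = List.ofFn fun i =>
          U * ((Matrix.diagonal fun j => (((eig j ^ p i : ℝ)) : ℂ)) * B) * star U from
      congrArg List.ofFn (funext fun i => hcfc fun x => x ^ p i)]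
    exact key fun i j => eig j ^ p i
  have e1 : trace ((hH.cfc (fun x : ℝ => x ^ ((m : ℝ)⁻¹)) * A) ^ m)
      = ((∑ τ : Fin m → Fin 2, (∏ i, eig (τ i) ^ ((m : ℝ)⁻¹)) * rc τ : ℝ) : ℂ) := by
    rw [show (hH.cfc (fun x : ℝ => x ^ ((m : ℝ)⁻¹)) * A) ^ m
        = (List.ofFn fun _ : Fin m => hH.cfc (fun x : ℝ => x ^ ((m : ℝ)⁻¹)) * A).prod from by
      rw [List.ofFn_const, List.prod_replicate]]
    rw [show (List.ofFn fun _ : Fin m => hH.cfc (fun x : ℝ => x ^ ((m : ℝ)⁻¹)) * A)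
        = List.ofFn fun i : Fin m =>
          U * ((Matrix.diagonal fun j => (((eig j ^ ((m : ℝ)⁻¹) : ℝ)) : ℂ)) * B) * star U from
      congrArg List.ofFn (funext fun i => hcfc fun x => x ^ ((m : ℝ)⁻¹))]
    exact key fun i j => eig j ^ ((m : ℝ)⁻¹)
  have e3 : trace (T * A ^ m)
      = ((∑ τ : Fin m → Fin 2, eig (τ 0) * rc τ : ℝ) : ℂ) := by
    have hBpow : ∀ k : ℕ, B ^ k = star U * A ^ k * U := by
      intro k
      induction k with
      | zero => rw [pow_zero, pow_zero, Matrix.mul_one, hVU]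
      | succ k ih =>
        rw [pow_succ, pow_succ, ih, hBdef]
        simp only [Matrix.mul_assoc]
        rw [← Matrix.mul_assoc U (star U), hUV, Matrix.one_mul]
    have hTA : T * A ^ m
        = U * ((Matrix.diagonal fun j => ((eig j : ℝ) : ℂ)) * B ^ m) * star U := by
      conv_lhs => rw [hH.spectral_theorem]
      rw [hBpow m]
      simp only [Matrix.mul_assoc]
      rw [← Matrix.mul_assoc (A ^ m) U (star U), Matrix.mul_assoc (A ^ m) U (star U),
        hUV, Matrix.mul_one]
      rw [Unitary.conjStarAlgAut_apply]
      simp only [Matrix.mul_assoc]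
      rfl
    obtain ⟨k, hk⟩ := Nat.exists_eq_succ_of_ne_zero hm.ne'
    have hlist : (Matrix.diagonal fun j => ((eig j : ℝ) : ℂ)) * B ^ m
        = (List.ofFn fun i : Fin m =>
          (Matrix.diagonal fun j => (((if i = (0 : Fin m) then eig j else 1) : ℝ) : ℂ)) * B).prod := by
      subst hk
      rw [List.ofFn_succ, List.prod_cons]
      have htail : (fun i : Fin k =>
          (Matrix.diagonal fun j => (((if i.succ = (0 : Fin (k+1)) then eig j else 1) : ℝ) : ℂ)) * B)
          = fun _ : Fin k => B := by
        funext i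
        simp [Fin.succ_ne_zero i]
      have hhead : (Matrix.diagonal fun j =>
          (((if (0 : Fin (k+1)) = (0 : Fin (k+1)) then eig j else 1) : ℝ) : ℂ))
          = Matrix.diagonal fun j => ((eig j : ℝ) : ℂ) := by simp
      rw [htail, List.ofFn_const, List.prod_replicate, hhead, Matrix.mul_assoc, ← pow_succ']
    have e3' := key fun i j => if i = (0 : Fin m) then eig j else 1
    have hmap2 : (List.ofFn fun i : Fin m =>
        U * ((Matrix.diagonal fun j => (((if i = (0 : Fin m) then eig j else 1) : ℝ) : ℂ)) * B) * star U)
        = (List.ofFn fun i : Fin m =>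
          (Matrix.diagonal fun j => (((if i = (0 : Fin m) then eig j else 1) : ℝ) : ℂ)) * B).map
            fun X => U * X * star U := by
      rw [List.map_ofFn]; rfl
    rw [hmap2, aux_map_conj_prod U (star U) hUV hVU, ← hlist] at e3'
    rw [hTA, e3']
    congr 1
    refine Finset.sum_congr rfl fun τ _ => ?_
    congr 1
    rw [Finset.prod_eq_single (0 : Fin m) (fun i _ hi => by rw [if_neg hi])
      (fun h => absurd (Finset.mem_univ _) h), if_pos rfl]
  rw [e1, e2, e3, Complex.real_le_real, Complex.real_le_real]
  exact aux_real_core m eig heig rc hrc0 hrot p hp hsum
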